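/- arXiv:2305.05876 — 3 statements merged into one kernel-verified Lean document; each statement's English description precedes it below -/
import Mathlib

section
/- Let Σ be a compact oriented surface, μ a Borel probability measure on Σ, φ ∈ Homeo_0(Σ, μ), and Φ an identity isotopy of φ. Then under the homeomorphism η: (ℝ/ℤ) × Σ → M_φ, [(t, p)] ↦ [(t, φ_t^{-1}(p))], the asymptotic cycle satisfies η^*·C(φ, μ) = [𝕋] + F(Φ, μ) in H_1((ℝ/ℤ) × Σ; ℝ), where [𝕋] is the class of the circle factor. -/
open MeasureTheory Set Function Filter

noncomputable section

/-- The circle `𝕋 = ℝ/ℤ`. -/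
abbrev Circ : Type := AddCircle (1 : ℝ)

variable {X : Type*} [TopologicalSpace X]

/-- An identity isotopy of a homeomorphism `φ`: a continuous path `t ↦ φₜ` of
homeomorphisms (continuous, together with the inverses, in the `C⁰` sense)
with `φ₀ = id` and `φ₁ = φ`. -/
structure IdentityIsotopy (φ : X ≃ₜ X) where
  φt : ℝ → X ≃ₜ X
  continuous_toFun : Continuous fun p : ℝ × X => φt p.1 p.2
  continuous_invFun : Continuous fun p : ℝ × X => (φt p.1).symm p.2
  map_zero : φt 0 = Homeomorph.refl X
  map_one : φt 1 = φ

/-- `g : X → ℝ` is the real-valued lift of the circle-valued function `f ∘ φ − f`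
determined by the identity isotopy `Φ`: it is the endpoint of a continuous family of
real-valued lifts of `f ∘ φₜ − f` starting at `0`. -/
def IsRotationLift {φ : X ≃ₜ X} (Φ : IdentityIsotopy φ) (f : C(X, Circ)) (g : X → ℝ) : Prop :=
  ∃ G : ℝ × X → ℝ, Continuous G ∧ (∀ x, G (0, x) = 0) ∧
    (∀ t x, ((G (t, x) : ℝ) : Circ) = f (Φ.φt t x) - f x) ∧ ∀ x, g x = G (1, x)

/-- `RotPair Φ μ f r` says that the pairing `⟨F(Φ, μ), [f]⟩` of the rotation vector
`F(Φ, μ) ∈ H₁(X; ℝ) ≅ Hom([X, ℝ/ℤ], ℝ)` of the `φ`-invariant measure `μ` with the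
cohomology class of `f : X → ℝ/ℤ` equals `r`, i.e. `∫ g dμ = r` for the lift `g` of
`f ∘ φ − f` determined by `Φ`. -/
def RotPair [MeasurableSpace X] {φ : X ≃ₜ X} (Φ : IdentityIsotopy φ) (μ : Measure X)
    (f : C(X, Circ)) (r : ℝ) : Prop :=
  ∃ g : X → ℝ, IsRotationLift Φ f g ∧ ∫ x, g x ∂μ = r

/-- The mapping-torus identification on `ℝ × X`: `(t, x) ∼ (t − n, eⁿ x)` for `n : ℤ`
(so in particular `(1, x) ∼ (0, e x)`), where `e` is the underlying bijection of the
homeomorphism. -/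
def mtRel {X : Type*} (e : Equiv.Perm X) (p q : ℝ × X) : Prop :=
  ∃ n : ℤ, q.1 = p.1 - n ∧ q.2 = (e ^ n) p.2

/-- The mapping torus `M_φ`: the quotient of `ℝ × X` by `(1, x) ∼ (0, e x)`, with the
quotient topology. -/
def MappingTorus {X : Type*} [TopologicalSpace X] (e : Equiv.Perm X) : Type _ :=
  Quot (mtRel e)

instance {X : Type*} [TopologicalSpace X] (e : Equiv.Perm X) :
    TopologicalSpace (MappingTorus e) :=
  inferInstanceAs (TopologicalSpace (Quot (mtRel e)))

instance {X : Type*} [TopologicalSpace X] (e : Equiv.Perm X) :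
    MeasurableSpace (MappingTorus e) := borel _

instance {X : Type*} [TopologicalSpace X] (e : Equiv.Perm X) :
    BorelSpace (MappingTorus e) := ⟨rfl⟩

/-- The canonical projection `ℝ × X → M_φ`. -/
def mtMk {X : Type*} [TopologicalSpace X] (e : Equiv.Perm X) : ℝ × X → MappingTorus e :=
  Quot.mk (mtRel e)

/-- The suspension flow `ψ^s [(t, x)] = [(t + s, x)]` on the mapping torus. -/
def suspFlow {X : Type*} [TopologicalSpace X] (e : Equiv.Perm X) (s : ℝ) :
    MappingTorus e → MappingTorus e :=
  Quot.map (fun p => (p.1 + s, p.2)) (by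
    rintro ⟨t, x⟩ ⟨t', y⟩ ⟨n, h1, h2⟩
    exact ⟨n, by simp only at h1 h2 ⊢; rw [h1]; ring, h2⟩)

/-- The measure `dt ⊗ μ` on the mapping torus: the pushforward of the product of
Lebesgue measure on `[0,1)` with `μ` under the canonical projection. -/
def mtMeasure {X : Type*} [TopologicalSpace X] (e : Equiv.Perm X) [MeasurableSpace X]
    (μ : Measure X) : Measure (MappingTorus e) :=
  Measure.map (mtMk e) ((volume.restrict (Ico (0 : ℝ) 1)).prod μ)

/-- `AsympPair e μ f r` says that the pairing `⟨C(φ, μ), [f]⟩` of Schwartzman's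
asymptotic cycle `C(φ, μ) ∈ H₁(M_φ; ℝ) ≅ Hom([M_φ, ℝ/ℤ], ℝ)` with the class of
`f : M_φ → ℝ/ℤ` equals `r`: there is a continuous family `G (s, ·)` of real-valued
lifts of `f ∘ ψ^s − f` with `G (0, ·) = 0` such that `(∫ G (s, ·) d(dt ⊗ μ)) / s → r`
as `s → ∞` (by Kingman's subadditive ergodic theorem this limit is the integral of
`G = lim g_s / s` against `dt ⊗ μ`). -/
def AsympPair {X : Type*} [TopologicalSpace X] (e : Equiv.Perm X) [MeasurableSpace X]
    (μ : Measure X) (f : C(MappingTorus e, Circ)) (r : ℝ) : Prop :=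
  ∃ G : ℝ × MappingTorus e → ℝ, Continuous G ∧ (∀ m, G (0, m) = 0) ∧
    (∀ s m, ((G (s, m) : ℝ) : Circ) = f (suspFlow e s m) - f m) ∧
    Tendsto (fun s : ℝ => (∫ m, G (s, m) ∂(mtMeasure e μ)) / s) atTop (nhds r)

/-- The circle map `f : ℝ/ℤ → ℝ/ℤ` has degree `d`. -/
def HasCircleDegree (f : Circ → Circ) (d : ℤ) : Prop :=
  ∃ L : ℝ → ℝ, Continuous L ∧ (∀ t : ℝ, ((L t : ℝ) : Circ) = f (t : ℝ)) ∧ L 1 = L 0 + d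

section AuxLemmas

lemma aux_coe_int_zero (n : ℤ) : ((n : ℝ) : Circ) = 0 :=
  (AddCircle.coe_eq_zero_iff _).mpr ⟨n, by simp⟩

/-- A continuous real-valued function whose composition with `ℝ → ℝ/ℤ` vanishes, on a
preconnected space, vanishing at one point, vanishes identically. -/
lemma aux_intlift {Y : Type*} [TopologicalSpace Y] [PreconnectedSpace Y] {F : Y → ℝ}
    (hF : Continuous F) (hc : ∀ y, ((F y : ℝ) : Circ) = 0) {y₀ : Y} (h0 : F y₀ = 0)
    (y : Y) : F y = 0 := by
  have hint : ∀ z : Y, ∃ n : ℤ, (n : ℝ) = F z := by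
    intro z
    obtain ⟨n, hn⟩ := (AddCircle.coe_eq_zero_iff _).mp (hc z)
    exact ⟨n, by simpa using hn⟩
  have himg : IsPreconnected (range F) := isPreconnected_range hF
  have hord := himg.ordConnected
  by_contra hne
  obtain ⟨m, hm⟩ := hint y
  have hmem : F y ∈ range F := mem_range_self y
  have h0mem : (0 : ℝ) ∈ range F := h0 ▸ mem_range_self y₀
  rcases lt_or_gt_of_ne hne with hlt | hgt
  · -- F y < 0, so F y ≤ -1 ; then F y + 1/2 ∈ range F but is not an integer
    have hm1 : m ≤ -1 := by
      have : (m : ℝ) < 0 := hm ▸ hlt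
      have : m < 0 := by exact_mod_cast this
      omega
    have hmemIcc : F y + 1/2 ∈ Icc (F y) (0:ℝ) := by
      constructor
      · linarith
      · have : (m : ℝ) ≤ -1 := by exact_mod_cast hm1
        rw [← hm]; linarith
    have hsub := hord.out hmem h0mem hmemIcc
    obtain ⟨w, hw⟩ := hsub
    obtain ⟨k, hk⟩ := hint w
    rw [hw, ← hm] at hk
    have : (2 * k : ℤ) = 2 * m + 1 := by exact_mod_cast (by push_cast; linarith : ((2*k : ℤ) : ℝ) = ((2*m+1 : ℤ) : ℝ))
    omega
  · have hm1 : 1 ≤ m := by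
      have : (0:ℝ) < (m : ℝ) := hm ▸ hgt
      have : 0 < m := by exact_mod_cast this
      omega
    have hmemIcc : F y - 1/2 ∈ Icc (0:ℝ) (F y) := by
      constructor
      · have : (1:ℝ) ≤ (m : ℝ) := by exact_mod_cast hm1
        rw [← hm]; linarith
      · linarith
    have hsub := hord.out h0mem hmem hmemIcc
    obtain ⟨w, hw⟩ := hsub
    obtain ⟨k, hk⟩ := hint w
    rw [hw, ← hm] at hk
    have : (2 * k : ℤ) = 2 * m - 1 := by exact_mod_cast (by push_cast; linarith : ((2*k : ℤ) : ℝ) = ((2*m-1 : ℤ) : ℝ))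
    omega

lemma aux_map_shift (c a b : ℝ) :
    Measure.map (fun t => t + c) (volume.restrict (Ico a b)) = volume.restrict (Ico (a+c) (b+c)) := by
  ext u hu
  rw [Measure.map_apply (measurable_add_const c) hu, Measure.restrict_apply hu,
    Measure.restrict_apply ((measurable_add_const c) hu)]
  have hset : (fun t => t + c) ⁻¹' u ∩ Ico a b = (fun t => t + c) ⁻¹' (u ∩ Ico (a+c) (b+c)) := by
    ext t
    simp only [mem_inter_iff, mem_preimage, mem_Ico]
    constructor <;> rintro ⟨h1, h2, h3⟩ <;> exact ⟨h1, by linarith, by linarith⟩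
  rw [hset]
  exact measure_preimage_add_right volume c _

section MT

variable {Y : Type*} [TopologicalSpace Y]

lemma aux_mtMk_shift (e : Equiv.Perm Y) (t : ℝ) (x : Y) :
    mtMk e (t, x) = mtMk e (t - 1, e x) :=
  Quot.sound ⟨1, by simp⟩

lemma aux_suspFlow_mk (e : Equiv.Perm Y) (s t : ℝ) (x : Y) :
    suspFlow e s (mtMk e (t, x)) = mtMk e (t + s, x) := rfl

lemma aux_continuous_mtMk (e : Equiv.Perm Y) : Continuous (mtMk e) := continuous_quot_mk

lemma aux_continuous_suspFlow (e : Equiv.Perm Y) (s : ℝ) : Continuous (suspFlow e s) := by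
  refine (isQuotientMap_quot_mk (r := mtRel e)).continuous_iff.mpr ?_
  exact (aux_continuous_mtMk e).comp ((continuous_fst.add continuous_const).prodMk continuous_snd)

variable [MeasurableSpace Y] [OpensMeasurableSpace Y]

lemma aux_measurable_mtMk (e : Equiv.Perm Y) : Measurable (mtMk e) :=
  (aux_continuous_mtMk e).measurable

lemma aux_map_interval (e : Equiv.Perm Y) (μ : Measure Y) [SFinite μ]
    (hinv : MeasureTheory.MeasurePreserving (⇑e) μ μ) (a b : ℝ) :
    Measure.map (mtMk e) ((volume.restrict (Ico a b)).prod μ)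
      = Measure.map (mtMk e) ((volume.restrict (Ico (a-1) (b-1))).prod μ) := by
  have hT : MeasureTheory.MeasurePreserving (Prod.map (fun t : ℝ => t + (-1)) ⇑e)
      ((volume.restrict (Ico a b)).prod μ) ((volume.restrict (Ico (a-1) (b-1))).prod μ) := by
    refine MeasureTheory.MeasurePreserving.prod ⟨measurable_add_const _, ?_⟩ hinv
    rw [aux_map_shift, show a + -1 = a - 1 by ring, show b + -1 = b - 1 by ring]
  rw [← hT.map_eq, Measure.map_map (aux_measurable_mtMk e) hT.measurable]
  congr 1
  funext p
  show mtMk e p = mtMk e (p.1 + (-1), e p.2)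
  rw [show p.1 + (-1) = p.1 - 1 by ring, ← aux_mtMk_shift]


lemma aux_prod_split (μ : Measure Y) [SFinite μ] (u v w : ℝ) (huv : u ≤ v) (hvw : v ≤ w) :
    (volume.restrict (Ico u w)).prod μ
      = (volume.restrict (Ico u v)).prod μ + (volume.restrict (Ico v w)).prod μ := by
  rw [← Measure.add_prod, ← Measure.restrict_union (Ico_disjoint_Ico_same)
    measurableSet_Ico, Ico_union_Ico_eq_Ico huv hvw]

lemma aux_Mc_step (e : Equiv.Perm Y) (μ : Measure Y) [SFinite μ]
    (hinv : MeasureTheory.MeasurePreserving (⇑e) μ μ) (c : ℝ) :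
    Measure.map (mtMk e) ((volume.restrict (Ico c (c+1))).prod μ)
      = Measure.map (mtMk e) ((volume.restrict (Ico (c-1) ((c-1)+1))).prod μ) := by
  rw [aux_map_interval e μ hinv c (c+1), show c + 1 - 1 = (c-1) + 1 by ring]

lemma aux_Mc_int (e : Equiv.Perm Y) (μ : Measure Y) [SFinite μ]
    (hinv : MeasureTheory.MeasurePreserving (⇑e) μ μ) (m : ℤ) :
    Measure.map (mtMk e) ((volume.restrict (Ico (m:ℝ) ((m:ℝ)+1))).prod μ)
      = Measure.map (mtMk e) ((volume.restrict (Ico (0:ℝ) 1)).prod μ) := by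
  induction m using Int.induction_on with
  | zero => norm_num
  | succ i ih =>
      have := aux_Mc_step e μ hinv ((i:ℝ)+1)
      rw [show ((i:ℝ)+1) - 1 = (i:ℝ) by ring] at this
      push_cast
      rw [this]
      exact ih
  | pred i ih =>
      have := aux_Mc_step e μ hinv (-(i:ℝ))
      push_cast
      rw [← this]
      push_cast at ih
      exact ih

lemma aux_Mc (e : Equiv.Perm Y) (μ : Measure Y) [SFinite μ]
    (hinv : MeasureTheory.MeasurePreserving (⇑e) μ μ) (b : ℝ) :
    Measure.map (mtMk e) ((volume.restrict (Ico b (b+1))).prod μ)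
      = Measure.map (mtMk e) ((volume.restrict (Ico (0:ℝ) 1)).prod μ) := by
  have h1 : b < (⌊b⌋:ℝ) + 1 := Int.lt_floor_add_one b
  have h3 : (⌊b⌋:ℝ) ≤ b := Int.floor_le b
  have h2 : (⌊b⌋:ℝ) + 1 ≤ b + 1 := by linarith
  rw [aux_prod_split μ b ((⌊b⌋:ℝ)+1) (b+1) h1.le h2,
    Measure.map_add _ _ (aux_measurable_mtMk e),
    aux_map_interval e μ hinv ((⌊b⌋:ℝ)+1) (b+1),
    show (⌊b⌋:ℝ) + 1 - 1 = (⌊b⌋:ℝ) by ring, show b + 1 - 1 = b by ring,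
    ← Measure.map_add _ _ (aux_measurable_mtMk e), add_comm,
    ← aux_prod_split μ ((⌊b⌋:ℝ)) b ((⌊b⌋:ℝ)+1) h3 h1.le]
  exact aux_Mc_int e μ hinv ⌊b⌋

lemma aux_susp_inv (e : Equiv.Perm Y) (μ : Measure Y) [SFinite μ]
    (hinv : MeasureTheory.MeasurePreserving (⇑e) μ μ) (b : ℝ) :
    Measure.map (suspFlow e b) (mtMeasure e μ) = mtMeasure e μ := by
  rw [mtMeasure, Measure.map_map (aux_continuous_suspFlow e b).measurable
    (aux_measurable_mtMk e)]
  have hcomp : (suspFlow e b ∘ mtMk e) = mtMk e ∘ (Prod.map (fun t:ℝ => t + b) id) := rfl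
  have hmeas : Measurable (Prod.map (fun t:ℝ => t + b) (id : Y → Y)) :=
    (measurable_add_const b).prodMap measurable_id
  rw [hcomp, ← Measure.map_map (aux_measurable_mtMk e) hmeas]
  have hshift : Measure.map (Prod.map (fun t:ℝ => t + b) id)
      ((volume.restrict (Ico (0:ℝ) 1)).prod μ) = (volume.restrict (Ico b (b+1))).prod μ := by
    have hmp : MeasureTheory.MeasurePreserving (fun t:ℝ => t + b)
        (volume.restrict (Ico (0:ℝ) 1)) (volume.restrict (Ico b (b+1))) :=
      ⟨measurable_add_const b, by rw [aux_map_shift, zero_add, add_comm 1 b]⟩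
    exact (hmp.prod (MeasureTheory.MeasurePreserving.id μ)).map_eq
  rw [hshift]
  exact aux_Mc e μ hinv b

lemma aux_integrable_prod {Z : Type*} [TopologicalSpace Z] [CompactSpace Z]
    [MeasurableSpace Z] [OpensMeasurableSpace Z] (μ : Measure Z) [IsFiniteMeasure μ]
    {F : ℝ × Z → ℝ} (hF : Continuous F) :
    Integrable F ((volume.restrict (Ico (0:ℝ) 1)).prod μ) := by
  haveI : IsFiniteMeasure (volume.restrict (Ico (0:ℝ) 1)) :=
    ⟨by simp [Real.volume_Ico]⟩
  obtain ⟨C, hC⟩ := ((isCompact_Icc (a := (0:ℝ)) (b := 1)).prod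
    isCompact_univ).exists_bound_of_continuousOn hF.continuousOn
  refine ⟨hF.aestronglyMeasurable, MeasureTheory.HasFiniteIntegral.of_bounded (C := C) ?_⟩
  have hae : ∀ᵐ p ∂((volume.restrict (Ico (0:ℝ) 1)).prod μ),
      p ∈ (Icc (0:ℝ) 1) ×ˢ (univ : Set Z) := by
    rw [MeasureTheory.ae_iff]
    have hset : {p : ℝ × Z | ¬ p ∈ (Icc (0:ℝ) 1) ×ˢ (univ : Set Z)}
        = ((Icc (0:ℝ) 1)ᶜ) ×ˢ (univ : Set Z) := by
      ext p; simp
    rw [hset, Measure.prod_prod, Measure.restrict_apply measurableSet_Icc.compl]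
    have : (Icc (0:ℝ) 1)ᶜ ∩ Ico (0:ℝ) 1 = ∅ := by
      rw [Set.eq_empty_iff_forall_notMem]
      rintro t ⟨h1, h2⟩
      exact h1 (Ico_subset_Icc_self h2)
    rw [this]
    simp
  filter_upwards [hae] with p hp
  exact hC p hp

lemma aux_integrable_compact {Z : Type*} [TopologicalSpace Z] [CompactSpace Z]
    [MeasurableSpace Z] [OpensMeasurableSpace Z] (μ : Measure Z) [IsFiniteMeasure μ]
    {F : Z → ℝ} (hF : Continuous F) : Integrable F μ :=
  ⟨hF.aestronglyMeasurable, MeasureTheory.HasFiniteIntegral.of_bounded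
    (C := (isCompact_univ.exists_bound_of_continuousOn hF.continuousOn).choose)
    (MeasureTheory.ae_of_all _ fun y =>
      (isCompact_univ.exists_bound_of_continuousOn hF.continuousOn).choose_spec y (mem_univ y))⟩

end MT

end AuxLemmas

/-- **Lemma (computation of the asymptotic cycle).**  Let `S` be a compact oriented
surface, `μ` a Borel probability measure, `φ ∈ Homeo₀(S, μ)`, and `Φ` an identity
isotopy of `φ`.  Under the homeomorphism `η : (ℝ/ℤ) × S → M_φ`,
`[(t, p)] ↦ [(t, φₜ⁻¹(p))]`, the asymptotic cycle satisfies
`η^* C(φ, μ) = [𝕋] + F(Φ, μ)` in `H₁((ℝ/ℤ) × S; ℝ)`.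

In pairing form: for `f : C((ℝ/ℤ) × S, ℝ/ℤ)` and `h = f ∘ η⁻¹ : C(M_φ, ℝ/ℤ)`,
`⟨C(φ, μ), h⟩ = deg (f(·, p₀)) + ⟨F(Φ, μ), f(0, ·)⟩`. -/
theorem asymptotic_cycle_of_isotopic_to_identity
    (S : Type*) [TopologicalSpace S] [CompactSpace S] [ConnectedSpace S] [T2Space S]
    [ChartedSpace (EuclideanHalfSpace 2) S] [MeasurableSpace S] [BorelSpace S]
    (μ : Measure S) [IsProbabilityMeasure μ]
    (φ : S ≃ₜ S) (Φ : IdentityIsotopy φ)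
    -- `φ ∈ Homeo₀(S, μ)` :
    (hmem : ∃ Ψ : IdentityIsotopy φ, ∀ t : ℝ, MeasurePreserving (Ψ.φt t) μ μ)
    (hinv : MeasurePreserving ⇑φ μ μ)
    (f : C(Circ × S, Circ)) (h : C(MappingTorus φ.toEquiv, Circ))
    -- `h = f ∘ η⁻¹`, i.e. `h ∘ η = f` :
    (hη : ∀ t ∈ Icc (0 : ℝ) 1, ∀ p : S,
      h (mtMk φ.toEquiv (t, (Φ.φt t).symm p)) = f ((t : Circ), p))
    (r : ℝ) (hr : AsympPair φ.toEquiv μ h r)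
    -- `d` is the degree of `f` on the circle factor :
    (p₀ : S) (d : ℤ) (hd : HasCircleDegree (fun u => f (u, p₀)) d)
    -- `s = ⟨F(Φ, μ), f(0, ·)⟩` :
    (s : ℝ)
    (hs : RotPair Φ μ
      ⟨fun p => f ((0 : Circ), p),
        f.continuous.comp (continuous_const.prodMk continuous_id)⟩ s) :
    r = (d : ℝ) + s := by
  classical
  obtain ⟨G, hGc, hG0, hGcoe, hGlim⟩ := hr
  obtain ⟨g, ⟨G₀, hG0c, hG00, hG0coe, hgG⟩, hgint⟩ := hs
  obtain ⟨L, hLc, hLcoe, hL1⟩ := hd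
  have hinv' : MeasureTheory.MeasurePreserving (⇑φ.toEquiv) μ μ := hinv
  set ν₀ : Measure (ℝ × S) := (volume.restrict (Ico (0:ℝ) 1)).prod μ with hν₀
  have hmtc : Continuous (mtMk φ.toEquiv) := aux_continuous_mtMk φ.toEquiv
  have hφc : Continuous (⇑φ) := φ.continuous
  have coe2 : ∀ A B : ℝ, ((A - B : ℝ) : Circ) = (A : Circ) - (B : Circ) := fun _ _ => rfl
  have coe3 : ∀ A B C : ℝ, ((A - B - C : ℝ) : Circ) = (A : Circ) - B - C := fun _ _ _ => rfl
  have coe4 : ∀ A B C D : ℝ, ((A - B + C - D : ℝ) : Circ) = (A : Circ) - B + C - D :=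
    fun _ _ _ _ => rfl
  have k1 : ∀ (t : ℝ) (x : S), mtMk φ.toEquiv (t + 1, x) = mtMk φ.toEquiv (t, φ x) := by
    intro t x
    rw [aux_mtMk_shift φ.toEquiv (t+1) x, show t + 1 - 1 = t by ring]
    rfl
  -- ★ : the key pointwise identity for `G (1, ·)` in coordinates
  have star : ∀ (t : ℝ) (x : S),
      G (1, mtMk φ.toEquiv (t, x)) = G (t, mtMk φ.toEquiv (0, φ x)) - G (t, mtMk φ.toEquiv (0, x))
        + G (1, mtMk φ.toEquiv (0, x)) := by
    set D : ℝ × S → ℝ := fun q =>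
      G (1, mtMk φ.toEquiv (q.1, q.2)) - G (q.1, mtMk φ.toEquiv (0, φ q.2)) + G (q.1, mtMk φ.toEquiv (0, q.2))
        - G (1, mtMk φ.toEquiv (0, q.2)) with hD
    have hDc : Continuous D := by
      simp only [hD]
      fun_prop
    have hDcoe : ∀ q : ℝ × S, ((D q : ℝ) : Circ) = 0 := by
      rintro ⟨t, x⟩
      simp only [hD]
      rw [coe4, hGcoe, hGcoe, hGcoe, hGcoe, aux_suspFlow_mk, aux_suspFlow_mk,
        aux_suspFlow_mk, aux_suspFlow_mk, k1 t x, k1 0 x, zero_add]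
      abel
    have hD0 : D ((0:ℝ), p₀) = 0 := by simp [hD, hG0]
    intro t x
    have hz := aux_intlift hDc hDcoe hD0 (t, x)
    simp only [hD] at hz
    linarith
  -- the cocycle identity for G
  have coc : ∀ (a b : ℝ) (m : MappingTorus φ.toEquiv),
      G (a + b, m) = G (b, m) + G (a, suspFlow φ.toEquiv b m) := by
    set D : ℝ × ℝ × ℝ × S → ℝ := fun q =>
      G (q.1 + q.2.1, mtMk φ.toEquiv (q.2.2.1, q.2.2.2)) - G (q.2.1, mtMk φ.toEquiv (q.2.2.1, q.2.2.2))
        - G (q.1, mtMk φ.toEquiv (q.2.2.1 + q.2.1, q.2.2.2)) with hD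
    have hDc : Continuous D := by
      simp only [hD]
      fun_prop
    have hDcoe : ∀ q : ℝ × ℝ × ℝ × S, ((D q : ℝ) : Circ) = 0 := by
      rintro ⟨a, b, t, x⟩
      simp only [hD]
      rw [coe3, hGcoe, hGcoe, hGcoe, aux_suspFlow_mk, aux_suspFlow_mk, aux_suspFlow_mk,
        show t + (a + b) = t + b + a by ring]
      abel
    have hD0 : D ((0:ℝ), (0:ℝ), (0:ℝ), p₀) = 0 := by simp [hD, hG0]
    intro a b m
    obtain ⟨p, hp⟩ := Quot.exists_rep m
    obtain ⟨t, x⟩ := p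
    rw [← hp]
    show G (a + b, mtMk φ.toEquiv (t, x)) = G (b, mtMk φ.toEquiv (t, x)) + G (a, suspFlow φ.toEquiv b (mtMk φ.toEquiv (t, x)))
    rw [aux_suspFlow_mk]
    have hz := aux_intlift hDc hDcoe hD0 (a, b, t, x)
    simp only [hD] at hz
    linarith
  -- integrability on the mapping torus
  have hintν : ∀ F : MappingTorus φ.toEquiv → ℝ, Continuous F → Integrable F (mtMeasure φ.toEquiv μ) := by
    intro F hF
    rw [mtMeasure]
    exact (integrable_map_measure hF.aestronglyMeasurable
      (aux_measurable_mtMk φ.toEquiv).aemeasurable).mpr (aux_integrable_prod μ (hF.comp hmtc))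
  -- flow invariance of integrals
  have hsusp_int : ∀ (b : ℝ) (F : MappingTorus φ.toEquiv → ℝ), Continuous F →
      ∫ m, F (suspFlow φ.toEquiv b m) ∂(mtMeasure φ.toEquiv μ) = ∫ m, F m ∂(mtMeasure φ.toEquiv μ) := by
    intro b F hF
    conv_rhs => rw [← aux_susp_inv φ.toEquiv μ hinv' b]
    rw [integral_map (aux_continuous_suspFlow φ.toEquiv b).aemeasurable
      (by rw [aux_susp_inv φ.toEquiv μ hinv' b]; exact hF.aestronglyMeasurable)]
  set I : ℝ := ∫ m, G (1, m) ∂(mtMeasure φ.toEquiv μ) with hIdef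
  have hIn : ∀ n : ℕ, ∫ m, G ((n:ℝ), m) ∂(mtMeasure φ.toEquiv μ) = n * I := by
    intro n
    induction n with
    | zero => simp [hG0]
    | succ n ih =>
      have hfun : (fun m => G (((n+1 : ℕ) : ℝ), m))
          = fun m => G ((n:ℝ), m) + G (1, suspFlow φ.toEquiv (n:ℝ) m) := by
        funext m
        rw [show (((n+1:ℕ)) : ℝ) = 1 + (n:ℝ) by push_cast; ring]
        exact coc 1 (n:ℝ) m
      rw [hfun, integral_add
        (hintν _ (by fun_prop))
        (hintν _ (by
          have hsf : Continuous (suspFlow φ.toEquiv (n:ℝ)) := aux_continuous_suspFlow φ.toEquiv (n:ℝ)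
          fun_prop)),
        ih, hsusp_int (n:ℝ) (fun m => G (1, m)) (by fun_prop)]
      push_cast
      ring
  have hrI : r = I := by
    have t1 : Tendsto (fun n : ℕ => (∫ m, G ((n:ℝ), m) ∂(mtMeasure φ.toEquiv μ)) / (n:ℝ))
        atTop (nhds r) := hGlim.comp tendsto_natCast_atTop_atTop
    have hEE : (fun _ : ℕ => I)
        =ᶠ[atTop] (fun n : ℕ => (∫ m, G ((n:ℝ), m) ∂(mtMeasure φ.toEquiv μ)) / (n:ℝ)) := by
      filter_upwards [eventually_ge_atTop 1] with n hn
      have hne : (n:ℝ) ≠ 0 := Nat.cast_ne_zero.mpr (by omega)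
      rw [hIn n, mul_div_cancel_left₀ _ hne]
    exact tendsto_nhds_unique t1 (Tendsto.congr' hEE tendsto_const_nhds)
  have hI1 : I = ∫ p : ℝ × S, G (1, mtMk φ.toEquiv p) ∂ν₀ := by
    rw [hIdef, mtMeasure]
    exact integral_map (aux_measurable_mtMk φ.toEquiv).aemeasurable
      (Continuous.aestronglyMeasurable (by fun_prop))
  have hI2 : ∫ p : ℝ × S, G (1, mtMk φ.toEquiv p) ∂ν₀
      = ∫ p : ℝ × S, (G (p.1, mtMk φ.toEquiv (0, φ p.2)) - G (p.1, mtMk φ.toEquiv (0, p.2))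
        + G (1, mtMk φ.toEquiv (0, p.2))) ∂ν₀ := by
    refine integral_congr_ae (MeasureTheory.ae_of_all _ ?_)
    rintro ⟨t, x⟩
    exact star t x
  have hc1 : Continuous fun p : ℝ × S => G (p.1, mtMk φ.toEquiv (0, φ p.2)) := by fun_prop
  have hc2 : Continuous fun p : ℝ × S => G (p.1, mtMk φ.toEquiv (0, p.2)) := by fun_prop
  have hc3 : Continuous fun p : ℝ × S => G (1, mtMk φ.toEquiv (0, p.2)) := by fun_prop
  have hmapφ : Measure.map (fun p : ℝ × S => (p.1, φ p.2)) ν₀ = ν₀ :=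
    ((MeasureTheory.MeasurePreserving.id (volume.restrict (Ico (0:ℝ) 1))).prod hinv').map_eq
  have hcancel : ∫ p : ℝ × S, G (p.1, mtMk φ.toEquiv (0, φ p.2)) ∂ν₀
      = ∫ p : ℝ × S, G (p.1, mtMk φ.toEquiv (0, p.2)) ∂ν₀ := by
    have hsm : AEStronglyMeasurable (fun p : ℝ × S => G (p.1, mtMk φ.toEquiv (0, p.2)))
        (Measure.map (fun p : ℝ × S => (p.1, φ p.2)) ν₀) := by
      rw [hmapφ]; exact hc2.aestronglyMeasurable
    have hmm : AEMeasurable (fun p : ℝ × S => (p.1, φ p.2)) ν₀ :=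
      Continuous.aemeasurable (by fun_prop)
    have hIM := integral_map (μ := ν₀) hmm hsm
    rw [hmapφ] at hIM
    exact hIM.symm
  have hsnd : Measure.map Prod.snd ν₀ = μ := by
    rw [hν₀, Measure.map_snd_prod]
    simp [Real.volume_Ico]
  have hlast : ∫ p : ℝ × S, G (1, mtMk φ.toEquiv (0, p.2)) ∂ν₀
      = ∫ x, G (1, mtMk φ.toEquiv (0, x)) ∂μ := by
    conv_rhs => rw [← hsnd]
    rw [integral_map measurable_snd.aemeasurable
      (by rw [hsnd]; exact (hGc.comp (continuous_const.prodMk (hmtc.comp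
        (continuous_const.prodMk continuous_id)))).aestronglyMeasurable)]
  -- the degree enters : comparison of the two lifts
  have hA1 : ∀ x : S, G (1, mtMk φ.toEquiv (0, x)) = g x + d := by
    have hsymc : Continuous fun q : ℝ × S => (Φ.φt q.1).symm q.2 := Φ.continuous_invFun
    have hmk0 : ∀ w : S, h (mtMk φ.toEquiv (0, w)) = f ((0 : Circ), w) := by
      intro w
      have h2 := hη 0 ⟨le_refl 0, zero_le_one⟩ (Φ.φt 0 w)
      rw [Homeomorph.symm_apply_apply] at h2
      rw [h2, Φ.map_zero]
      rfl
    have hZcoe : ∀ t, t ∈ Icc (0:ℝ) 1 → ∀ y : S,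
        ((G (t, mtMk φ.toEquiv (0, (Φ.φt t).symm y)) - G₀ (t, (Φ.φt t).symm y) : ℝ) : Circ)
          = f (((t:ℝ) : Circ), y) - f ((0 : Circ), y) := by
      intro t ht y
      rw [coe2, hGcoe, hG0coe, aux_suspFlow_mk, zero_add, hη t ht y, hmk0]
      simp only [ContinuousMap.coe_mk]
      rw [Homeomorph.apply_symm_apply]
      abel
    haveI : PreconnectedSpace (Icc (0:ℝ) 1) := Subtype.preconnectedSpace isPreconnected_Icc
    have h10 : ((1:ℝ) : Circ) = (0 : Circ) := AddCircle.coe_period 1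
    have hWzero : ∀ u : Icc (0:ℝ) 1,
        G (u.1, mtMk φ.toEquiv (0, (Φ.φt u.1).symm p₀)) - G₀ (u.1, (Φ.φt u.1).symm p₀)
          - (L u.1 - L 0) = 0 := by
      have hsym1 : Continuous fun t : ℝ => (Φ.φt t).symm p₀ :=
        hsymc.comp (continuous_id.prodMk continuous_const)
      intro u
      refine aux_intlift (F := fun u : Icc (0:ℝ) 1 =>
        G (u.1, mtMk φ.toEquiv (0, (Φ.φt u.1).symm p₀)) - G₀ (u.1, (Φ.φt u.1).symm p₀)
          - (L u.1 - L 0)) ?_ ?_ (y₀ := ⟨0, ⟨le_refl 0, zero_le_one⟩⟩) ?_ u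
      · have c1 : Continuous fun t : ℝ => G (t, mtMk φ.toEquiv (0, (Φ.φt t).symm p₀))
            - G₀ (t, (Φ.φt t).symm p₀) - (L t - L 0) := by fun_prop
        exact c1.comp continuous_subtype_val
      · intro v
        show ((G (v.1, mtMk φ.toEquiv (0, (Φ.φt v.1).symm p₀)) - G₀ (v.1, (Φ.φt v.1).symm p₀)
          - (L v.1 - L 0) : ℝ) : Circ) = 0
        rw [coe2, hZcoe v.1 v.2 p₀, coe2, hLcoe, hLcoe]
        simp only
        rw [show ((0:ℝ) : Circ) = 0 from rfl]
        abel
      · show G (0, mtMk φ.toEquiv (0, (Φ.φt 0).symm p₀)) - G₀ (0, (Φ.φt 0).symm p₀)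
          - (L 0 - L 0) = 0
        rw [hG0, hG00]
        norm_num
    have hZ1 : ∀ y : S, G (1, mtMk φ.toEquiv (0, (Φ.φt 1).symm y)) - G₀ (1, (Φ.φt 1).symm y)
        = d := by
      have hsym2 : Continuous fun y : S => (Φ.φt 1).symm y := (Φ.φt 1).symm.continuous
      intro y
      have hzy := aux_intlift (F := fun y : S =>
        G (1, mtMk φ.toEquiv (0, (Φ.φt 1).symm y)) - G₀ (1, (Φ.φt 1).symm y) - (d : ℝ))
        (by fun_prop)
        (fun y => by
          show ((G (1, mtMk φ.toEquiv (0, (Φ.φt 1).symm y)) - G₀ (1, (Φ.φt 1).symm y)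
            - (d : ℝ) : ℝ) : Circ) = 0
          rw [coe2, hZcoe 1 ⟨zero_le_one, le_refl 1⟩ y, aux_coe_int_zero, h10]
          abel)
        (y₀ := p₀)
        (by
          show G (1, mtMk φ.toEquiv (0, (Φ.φt 1).symm p₀)) - G₀ (1, (Φ.φt 1).symm p₀)
            - (d : ℝ) = 0
          have hW1 := hWzero ⟨1, ⟨zero_le_one, le_refl 1⟩⟩
          simp only at hW1
          rw [hL1] at hW1
          linarith)
        y
      have hzy' : G (1, mtMk φ.toEquiv (0, (Φ.φt 1).symm y)) - G₀ (1, (Φ.φt 1).symm y)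
          - (d : ℝ) = 0 := hzy
      linarith
    intro x
    have hzx := hZ1 (φ x)
    rw [Φ.map_one, Homeomorph.symm_apply_apply] at hzx
    rw [hgG x]
    linarith
  have hgc : Continuous fun x : S => G₀ (1, x) := by fun_prop
  have hfinal : ∫ x, G (1, mtMk φ.toEquiv (0, x)) ∂μ = s + d := by
    rw [show (fun x : S => G (1, mtMk φ.toEquiv (0, x))) = fun x => g x + (d:ℝ) from funext hA1]
    have hgint2 : Integrable (fun x : S => g x) μ := by
      rw [show (fun x : S => g x) = fun x => G₀ (1, x) from funext hgG]
      exact aux_integrable_compact μ hgc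
    rw [integral_add hgint2 (integrable_const _)]
    rw [hgint, integral_const]
    simp [measure_univ]
  have : r = s + d := by
    have hInt12 : Integrable (fun p : ℝ × S => G (p.1, mtMk φ.toEquiv (0, φ p.2))
        - G (p.1, mtMk φ.toEquiv (0, p.2))) ν₀ := aux_integrable_prod μ (hc1.sub hc2)
    rw [hrI, hI1, hI2, integral_add hInt12 (aux_integrable_prod μ hc3),
      integral_sub (aux_integrable_prod μ hc1) (aux_integrable_prod μ hc2),
      hcancel, sub_self, zero_add, hlast, hfinal]
  rw [this]
  ring


end
end

section
/- Let Σ be a closed oriented surface with area form ω, p ∈ Σ, and Φ: [0,1] → Diff_0(Σ, ω) an identity isotopy such that Φ(t) fixes p for every t. Let (Σ̂, ω̂) be the surface obtained by blowing up p and gluing in a disk of prescribed area (so that ∫_{Σ̂} ω̂ > ∫_Σ ω), let π: Σ̂ → Σ be the blow-down map, and let Φ̂ be any extension of Φ to an identity isotopy in Diff(Σ̂, ω̂). Then (∫_{Σ̂} ω̂) · π_* F(Φ̂) = (∫_Σ ω) · F(Φ) in H_1(Σ; ℝ). -/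
open MeasureTheory Set Function Filter

noncomputable section

variable {X : Type*} [TopologicalSpace X]

/-- Uniqueness of continuous real lifts agreeing at one point, on a preconnected space. -/
lemma lift_unique {Y : Type*} [TopologicalSpace Y] [PreconnectedSpace Y]
    {G G' : Y → ℝ} (hG : Continuous G) (hG' : Continuous G')
    (hcirc : ∀ y, ((G y : ℝ) : Circ) = ((G' y : ℝ) : Circ))
    {y0 : Y} (h0 : G y0 = G' y0) (y : Y) : G y = G' y := by
  set D : Y → ℝ := fun y => G y - G' y with hD
  have hDc : Continuous D := hG.sub hG'
  have hint : ∀ y, ∃ n : ℤ, D y = n := by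
    intro y
    have hz : ((D y : ℝ) : Circ) = 0 := by
      have : ((D y : ℝ) : Circ) = ((G y : ℝ) : Circ) - ((G' y : ℝ) : Circ) := by
        simp [hD]
      rw [this, hcirc, sub_self]
    rcases (AddCircle.coe_eq_zero_iff _).mp hz with ⟨n, hn⟩
    exact ⟨n, by simpa using hn.symm⟩
  set e : Y → ℤ := fun y => ⌊D y⌋ with he
  have hDe : ∀ y, D y = (e y : ℝ) := by
    intro y
    rcases hint y with ⟨n, hn⟩
    simp [he, hn, Int.floor_intCast]
  have hec : Continuous e := by
    rw [continuous_discrete_rng]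
    intro n
    have : e ⁻¹' {n} = D ⁻¹' (Set.Ioo ((n : ℝ) - 1) ((n : ℝ) + 1)) := by
      ext y
      rcases hint y with ⟨m, hm⟩
      simp only [Set.mem_preimage, Set.mem_singleton_iff, Set.mem_Ioo, he, hm,
        Int.floor_intCast]
      constructor
      · rintro rfl
        constructor <;> [push_cast; push_cast] <;> linarith
      · rintro ⟨h1, h2⟩
        have h1' : n - 1 < m := by exact_mod_cast (by push_cast; linarith : ((n - 1 : ℤ) : ℝ) < (m : ℝ))
        have h2' : m < n + 1 := by exact_mod_cast (by push_cast; linarith : ((m : ℤ) : ℝ) < ((n + 1 : ℤ) : ℝ))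
        omega
    rw [this]
    exact isOpen_Ioo.preimage hDc
  have hcst : e y = e y0 := PreconnectedSpace.constant inferInstance hec
  have : D y = D y0 := by rw [hDe y, hDe y0, hcst]
  have hD0 : D y0 = 0 := by simp [hD, h0]
  have : D y = 0 := by rw [this, hD0]
  simpa [hD, sub_eq_zero] using this

/-- **Lemma (rotation vector of the blow-up).**  Let `S` be a closed oriented surface
with area form `ω` (inducing the measure `μ`), `p ∈ S`, and `Φ` an identity isotopy
in `Diff₀(S, ω)` fixing `p` at all times.  Let `S'` be the surface obtained by
blowing up `p` and gluing in a disk of prescribed positive area (so that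
`∫_{S'} ω' > ∫_S ω`), with area measure `ν`, let `pr : S' → S` be the blow-down map
(a continuous surjection collapsing the glued disk to `p`, injective away from it,
and measure-compatible away from `p`), and let `Φ'` be any extension of `Φ` to an
identity isotopy in `Diff(S', ω')`, i.e. `pr ∘ Φ'ₜ = Φₜ ∘ pr`.  Then
`(∫_{S'} ω') · pr_* F(Φ') = (∫_S ω) · F(Φ)` in `H₁(S; ℝ)`; in pairing form,
`(∫_{S'} ω') · ⟨F(Φ'), f ∘ pr⟩ = (∫_S ω) · ⟨F(Φ), f⟩` for every `f : S → ℝ/ℤ`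
(rotation vectors being taken with respect to the normalized area measures). -/
theorem blowup_rotation_vector
    (S : Type*) [TopologicalSpace S] [CompactSpace S] [ConnectedSpace S] [T2Space S]
    [MeasurableSpace S] [BorelSpace S]
    [ChartedSpace (EuclideanSpace ℝ (Fin 2)) S]
    [IsManifold (modelWithCornersSelf ℝ (EuclideanSpace ℝ (Fin 2))) (⊤ : ℕ∞) S]
    (S' : Type*) [TopologicalSpace S'] [CompactSpace S'] [ConnectedSpace S'] [T2Space S']
    [MeasurableSpace S'] [BorelSpace S']
    [ChartedSpace (EuclideanSpace ℝ (Fin 2)) S']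
    [IsManifold (modelWithCornersSelf ℝ (EuclideanSpace ℝ (Fin 2))) (⊤ : ℕ∞) S']
    -- the measures induced by the area forms `ω` on `S` and `ω'` on `S'` :
    (μ : Measure S) [IsFiniteMeasure μ] [NullSingletonClass μ]
    (hμpos : ∀ U : Set S, IsOpen U → U.Nonempty → 0 < μ U)
    (ν : Measure S') [IsFiniteMeasure ν] [NullSingletonClass ν]
    (hνpos : ∀ U : Set S', IsOpen U → U.Nonempty → 0 < ν U)
    (p : S)
    (φ : S ≃ₜ S) (Φ : IdentityIsotopy φ)
    -- `Φ` is an identity isotopy in `Diff₀(S, ω)` fixing `p` for every `t` :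
    (hsm : ∀ t : ℝ,
      ContMDiff (modelWithCornersSelf ℝ (EuclideanSpace ℝ (Fin 2)))
        (modelWithCornersSelf ℝ (EuclideanSpace ℝ (Fin 2))) (⊤ : ℕ∞) ⇑(Φ.φt t) ∧
      MeasurePreserving ⇑(Φ.φt t) μ μ)
    (hfix : ∀ t : ℝ, Φ.φt t p = p)
    -- the blow-down map `pr : S' → S` :
    (pr : S' → S) (hprc : Continuous pr) (hprs : Function.Surjective pr)
    (hprinj : Set.InjOn pr (pr ⁻¹' {p}ᶜ))
    (hprμ : ∀ E : Set S, MeasurableSet E → E ⊆ {p}ᶜ → ν (pr ⁻¹' E) = μ E)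
    -- the glued disk has positive area, so `∫_{S'} ω' > ∫_S ω` :
    (harea : μ Set.univ < ν Set.univ)
    -- `Φ'` is an extension of `Φ` to an identity isotopy in `Diff(S', ω')` :
    (φ' : S' ≃ₜ S') (Φ' : IdentityIsotopy φ')
    (hsm' : ∀ t : ℝ,
      ContMDiff (modelWithCornersSelf ℝ (EuclideanSpace ℝ (Fin 2)))
        (modelWithCornersSelf ℝ (EuclideanSpace ℝ (Fin 2))) (⊤ : ℕ∞) ⇑(Φ'.φt t) ∧
      MeasurePreserving ⇑(Φ'.φt t) ν ν)
    (hext : ∀ (t : ℝ) (x : S'), pr (Φ'.φt t x) = Φ.φt t (pr x)) :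
    ∀ (f : C(S, Circ)) (r' r : ℝ),
      RotPair Φ' ((ν Set.univ)⁻¹ • ν) (f.comp ⟨pr, hprc⟩) r' →
      RotPair Φ ((μ Set.univ)⁻¹ • μ) f r →
      (ν Set.univ).toReal * r' = (μ Set.univ).toReal * r := by
  rintro f r' r ⟨g', ⟨G', hG'c, hG'0, hG'circ, hg'⟩, hr'⟩ ⟨g, ⟨G, hGc, hG0, hGcirc, hg⟩, hr⟩
  have hgc : Continuous g := by
    have : g = fun x => G (1, x) := funext hg
    rw [this]
    exact hGc.comp (by continuity)
  -- `g p = 0` since `p` is fixed at all times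
  have hgp : g p = 0 := by
    have key : ∀ t : ℝ, G (t, p) = (fun _ : ℝ => (0 : ℝ)) t := by
      apply lift_unique (G := fun t => G (t, p)) (G' := fun _ => (0 : ℝ))
        (hGc.comp (by continuity)) continuous_const
      · intro t
        have := hGcirc t p
        rw [hfix t] at this
        simpa [sub_self] using this
      · exact hG0 p
    rw [hg p, key 1]
  -- `g' = g ∘ pr` by uniqueness of lifts
  have hkey : ∀ q : ℝ × S', G' q = G (q.1, pr q.2) := by
    obtain ⟨x0⟩ : Nonempty S' := by
      rcases hprs p with ⟨x0, _⟩; exact ⟨x0⟩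
    apply lift_unique (G := G') (G' := fun q : ℝ × S' => G (q.1, pr q.2)) hG'c
      (hGc.comp (by continuity)) _ (y0 := ((0 : ℝ), x0))
    · rw [hG'0 x0, hG0 (pr x0)]
    · rintro ⟨t, x⟩
      have h1 := hG'circ t x
      have h2 := hGcirc t (pr x)
      simp only [ContinuousMap.comp_apply, ContinuousMap.coe_mk] at h1
      rw [hext t x] at h1
      rw [h1, h2]
  have hg'eq : ∀ x, g' x = g (pr x) := by
    intro x
    rw [hg' x, hkey (1, x), hg (pr x)]
  -- measure-theoretic facts
  obtain ⟨x0, hx0⟩ := hprs p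
  have hνuniv0 : ν Set.univ ≠ 0 := (hνpos Set.univ isOpen_univ ⟨x0, trivial⟩).ne'
  have hμuniv0 : μ Set.univ ≠ 0 := (hμpos Set.univ isOpen_univ ⟨p, trivial⟩).ne'
  have hνtop : ν Set.univ ≠ ⊤ := measure_ne_top ν _
  have hμtop : μ Set.univ ≠ ⊤ := measure_ne_top μ _
  have hνR : (ν Set.univ).toReal ≠ 0 := ENNReal.toReal_ne_zero.mpr ⟨hνuniv0, hνtop⟩
  have hμR : (μ Set.univ).toReal ≠ 0 := ENNReal.toReal_ne_zero.mpr ⟨hμuniv0, hμtop⟩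
  -- unfold the normalized integrals
  have hr'2 : (ν Set.univ).toReal * r' = ∫ x, g' x ∂ν := by
    rw [← hr', integral_smul_measure, smul_eq_mul, ENNReal.toReal_inv, ← mul_assoc,
      mul_inv_cancel₀ hνR, one_mul]
  have hr2 : (μ Set.univ).toReal * r = ∫ x, g x ∂μ := by
    rw [← hr, integral_smul_measure, smul_eq_mul, ENNReal.toReal_inv, ← mul_assoc,
      mul_inv_cancel₀ hμR, one_mul]
  rw [hr'2, hr2]
  -- now show `∫ g' dν = ∫ g dμ`
  have hgpr : Continuous (g ∘ pr) := hgc.comp hprc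
  have hInt : Integrable (g ∘ pr) ν :=
    hgpr.integrable_of_hasCompactSupport (HasCompactSupport.of_compactSpace _)
  have hA : MeasurableSet (pr ⁻¹' {p}) := (measurableSet_singleton p).preimage hprc.measurable
  have step1 : ∫ x, g' x ∂ν = ∫ x, (g ∘ pr) x ∂ν := by
    apply integral_congr_ae
    filter_upwards with x
    exact hg'eq x
  have split : ∫ x, (g ∘ pr) x ∂ν
      = (∫ x in pr ⁻¹' {p}, (g ∘ pr) x ∂ν) + ∫ x in (pr ⁻¹' {p})ᶜ, (g ∘ pr) x ∂ν :=
    (integral_add_compl hA hInt).symm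
  have part1 : ∫ x in pr ⁻¹' {p}, (g ∘ pr) x ∂ν = 0 := by
    have : ∀ x ∈ pr ⁻¹' {p}, (g ∘ pr) x = (fun _ => (0 : ℝ)) x := by
      intro x hx
      simp only [Set.mem_preimage, Set.mem_singleton_iff] at hx
      simp [Function.comp, hx, hgp]
    rw [setIntegral_congr_fun hA this, integral_zero]
  have hmap : Measure.map pr (ν.restrict (pr ⁻¹' {p}ᶜ)) = μ.restrict {p}ᶜ := by
    ext F hF
    rw [Measure.map_apply hprc.measurable hF, Measure.restrict_apply (hprc.measurable hF),
      Measure.restrict_apply hF, ← Set.preimage_inter,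
      hprμ _ (hF.inter (measurableSet_singleton p).compl) Set.inter_subset_right]
  have hμrestrict : μ.restrict {p}ᶜ = μ := by
    rw [Measure.restrict_congr_set (t := Set.univ), Measure.restrict_univ]
    rw [ae_eq_univ, compl_compl]
    exact measure_singleton p
  have part2 : ∫ x in (pr ⁻¹' {p})ᶜ, (g ∘ pr) x ∂ν = ∫ y, g y ∂μ := by
    have hcompl : (pr ⁻¹' {p})ᶜ = pr ⁻¹' ({p}ᶜ) := by rw [Set.preimage_compl]
    rw [hcompl]
    have : ∫ x in pr ⁻¹' ({p}ᶜ), (g ∘ pr) x ∂ν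
        = ∫ y, g y ∂(Measure.map pr (ν.restrict (pr ⁻¹' {p}ᶜ))) := by
      rw [integral_map hprc.aemeasurable hgc.aestronglyMeasurable]
      rfl
    rw [this, hmap, hμrestrict]
  rw [step1, split, part1, part2, zero_add]

end
end

section
/- Let Σ be a compact oriented surface, φ ∈ Homeo_0(Σ) with identity isotopy Φ, and S = {x_1, …, x_k} a simple periodic orbit of φ of period k. Let γ ⊂ M_φ be the closed integral curve of the suspension flow corresponding to S. Then, identifying H_1(M_φ; ℤ) with H_1((ℝ/ℤ) × Σ; ℤ) via the homeomorphism η: (ℝ/ℤ) × Σ → M_φ, [(t, p)] ↦ [(t, φ_t^{-1}(p))], one has [γ] = k·([𝕋] + F(Φ, S)), where [𝕋] is the class of the circle factor. -/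
open MeasureTheory Set Function Filter

noncomputable section

variable {X : Type*} [TopologicalSpace X]

/-- The `φ`-invariant probability measure associated to the periodic orbit of `x` of
period `k`: the average of the Dirac measures at the points of the orbit. -/
def orbitMeasure {X : Type*} [MeasurableSpace X] (φ : X → X) (x : X) (k : ℕ) :
    Measure X :=
  (k : ENNReal)⁻¹ • ∑ j ∈ Finset.range k, Measure.dirac (φ^[j] x)

namespace OrbHelp

instance : Fact ((0:ℝ) < 1) := ⟨one_pos⟩

lemma int_ne_half (m : ℤ) : (m : ℝ) ≠ 2⁻¹ := by
  intro h
  rcases le_or_gt m 0 with hm | hm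
  · have : (m:ℝ) ≤ 0 := by exact_mod_cast hm
    norm_num [h] at this
  · have : (1:ℝ) ≤ m := by exact_mod_cast hm
    norm_num [h] at this

lemma coe_int_eq_zero (n : ℤ) : (((n : ℝ) : ℝ) : Circ) = 0 :=
  (AddCircle.coe_eq_zero_iff 1).mpr ⟨n, by simp⟩

lemma coe_nat_eq_zero (n : ℕ) : (((n : ℝ) : ℝ) : Circ) = 0 := by
  have := coe_int_eq_zero (n : ℤ)
  push_cast at this
  exact this

lemma exists_int_of_coe_eq {x y : ℝ} (h : ((x : ℝ) : Circ) = y) :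
    ∃ n : ℤ, x - y = n := by
  have h2 : ((x - y : ℝ) : Circ) = 0 := by
    rw [QuotientAddGroup.mk_sub, h, sub_self]
  obtain ⟨n, hn⟩ := (AddCircle.coe_eq_zero_iff 1).mp h2
  exact ⟨n, by simpa using hn.symm⟩

lemma bad_ne_zero : ((((-(2⁻¹) : ℝ)) : ℝ) : Circ) ≠ 0 := by
  intro h
  obtain ⟨n, hn⟩ := exists_int_of_coe_eq (y := 0) (by simpa using h)
  exact int_ne_half n (by linarith)

/-- Uniqueness of lifts: a continuous real function on `[a,b]` whose circle value is
constant is itself constant. -/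
lemma lift_const {a b : ℝ} (hab : a ≤ b) {h : ℝ → ℝ} (hc : ContinuousOn h (Icc a b))
    (hv : ∀ t ∈ Icc a b, ((h t : ℝ) : Circ) = ((h a : ℝ) : Circ)) : h b = h a := by
  obtain ⟨n, hn⟩ := exists_int_of_coe_eq (hv b ⟨hab, le_rfl⟩)
  rcases lt_trichotomy n 0 with hneg | hz | hpos
  · have hble : h b ≤ h a - 1 := by
      have : (n:ℝ) ≤ -1 := by exact_mod_cast Int.le_sub_one_of_lt hneg
      linarith
    have hmem : h a - 2⁻¹ ∈ Icc (h b) (h a) := ⟨by linarith, by linarith⟩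
    obtain ⟨t, ht, hteq⟩ := intermediate_value_Icc' hab hc hmem
    obtain ⟨m, hm⟩ := exists_int_of_coe_eq (hv t ht)
    rw [hteq] at hm
    have : ((-m : ℤ) : ℝ) = 2⁻¹ := by push_cast; linarith
    exact (int_ne_half _ this).elim
  · rw [hz] at hn; push_cast at hn; linarith
  · have hble : h a + 1 ≤ h b := by
      have : (1:ℝ) ≤ n := by exact_mod_cast hpos
      linarith
    have hmem : h a + 2⁻¹ ∈ Icc (h a) (h b) := ⟨by linarith, by linarith⟩
    obtain ⟨t, ht, hteq⟩ := intermediate_value_Icc hab hc hmem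
    obtain ⟨m, hm⟩ := exists_int_of_coe_eq (hv t ht)
    rw [hteq] at hm
    have : ((m : ℤ) : ℝ) = 2⁻¹ := by push_cast; linarith
    exact (int_ne_half _ this).elim

/-- The local section of `ℝ → ℝ/ℤ` with values in `(-1/2, 1/2]`. -/
def sec (u : Circ) : ℝ := ((AddCircle.equivIoc 1 (-(2⁻¹) : ℝ)) u : ℝ)

lemma sec_coe (u : Circ) : ((sec u : ℝ) : Circ) = u := by
  conv_rhs => rw [← (AddCircle.equivIoc 1 (-(2⁻¹) : ℝ)).symm_apply_apply u]
  rfl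

lemma sec_mem (u : Circ) : sec u ∈ Ioc (-(2⁻¹) : ℝ) (-(2⁻¹) + 1) :=
  ((AddCircle.equivIoc 1 (-(2⁻¹) : ℝ)) u).2

lemma sec_zero : sec 0 = 0 := by
  obtain ⟨n, hn⟩ := exists_int_of_coe_eq (y := 0) (by simpa using sec_coe 0)
  have hmem := sec_mem 0
  have hsec : sec 0 = (n : ℝ) := by linarith [hn]
  have h1 : (-(2⁻¹) : ℝ) < (n : ℝ) := hsec ▸ hmem.1
  have h2 : (n : ℝ) ≤ (-(2⁻¹) : ℝ) + 1 := hsec ▸ hmem.2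
  have hn1 : (-1 : ℤ) < n := by exact_mod_cast (by push_cast; linarith : ((-1 : ℤ) : ℝ) < (n : ℝ))
  have hn2 : n < 1 := by exact_mod_cast (by push_cast; linarith : ((n : ℤ) : ℝ) < ((1 : ℤ) : ℝ))
  have : n = 0 := by omega
  rw [hsec, this, Int.cast_zero]

lemma sec_continuousAt {u : Circ} (hu : u ≠ (((-(2⁻¹) : ℝ)) : Circ)) :
    ContinuousAt sec u :=
  continuousAt_subtype_val.comp (AddCircle.continuousAt_equivIoc 1 (-(2⁻¹)) hu)

end OrbHelp

/-- **Lemma (homology class of a closed orbit of the suspension flow).**  Let `S` be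
a compact oriented surface, `φ ∈ Homeo₀(S)` with identity isotopy `Φ`, and
`S₀ = {x₁, …, x_k}` a simple periodic orbit of `φ` of period `k` (so `x₁` has minimal
period `k`).  Let `γ ⊂ M_φ` be the corresponding closed integral curve of the
suspension flow.  Identifying `H₁(M_φ; ℤ)` with `H₁((ℝ/ℤ) × S; ℤ)` via the
homeomorphism `η : (ℝ/ℤ) × S → M_φ`, `[(t, p)] ↦ [(t, φₜ⁻¹(p))]`, one has
`[γ] = k · ([𝕋] + F(Φ, S₀))`.

In pairing form: `η⁻¹ ∘ γ` is the loop `s ↦ (s mod 1, φ_{s−⌊s⌋}(φ^{⌊s⌋}(x₁)))`,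
`s ∈ [0, k]`, and for every `f : C((ℝ/ℤ) × S, ℝ/ℤ)` with real lift `L` of
`f ∘ η⁻¹ ∘ γ`, the winding `L k − L 0` equals `k (d + ρ)`, where `d` is the degree
of `f` on the circle factor and `ρ = ⟨F(Φ, S₀), f(0, ·)⟩`. -/
theorem homology_class_of_closed_orbit
    (S : Type*) [TopologicalSpace S] [CompactSpace S] [ConnectedSpace S] [T2Space S]
    [ChartedSpace (EuclideanHalfSpace 2) S] [MeasurableSpace S] [BorelSpace S]
    (φ : S ≃ₜ S) (Φ : IdentityIsotopy φ)
    -- a simple periodic orbit of period `k`, represented by the point `x₁` :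
    (x₁ : S) (k : ℕ) (hk : 0 < k) (hper : Function.minimalPeriod ⇑φ x₁ = k)
    (f : C(Circ × S, Circ))
    -- `L` is a real lift of `f ∘ η⁻¹ ∘ γ` :
    (L : ℝ → ℝ) (hLc : Continuous L)
    (hL : ∀ s : ℝ, ((L s : ℝ) : Circ) =
      f ((s : Circ), Φ.φt (Int.fract s) ((φ.toEquiv ^ (⌊s⌋ : ℤ)) x₁)))
    -- `d` is the degree of `f` on the circle factor :
    (p₀ : S) (d : ℤ) (hd : HasCircleDegree (fun u => f (u, p₀)) d)
    -- `ρ = ⟨F(Φ, S₀), f(0, ·)⟩` :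
    (ρ : ℝ)
    (hρ : RotPair Φ (orbitMeasure ⇑φ x₁ k)
      ⟨fun pt => f ((0 : Circ), pt),
        f.continuous.comp (continuous_const.prodMk continuous_id)⟩ ρ) :
    L (k : ℝ) - L 0 = (k : ℝ) * ((d : ℝ) + ρ) := by
  obtain ⟨Ld, hLdc, hLdcoe, hLd1⟩ := hd
  obtain ⟨g, ⟨G, hGc, hG0, hGcoe, hgG⟩, hint⟩ := hρ
  -- the map F
  set F : ℝ × S → Circ := fun q => f ((q.1 : Circ), q.2) - f ((0:Circ), q.2) with hF
  have hFc : Continuous F := by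
    have h1 : Continuous fun q : ℝ × S => f ((q.1 : Circ), q.2) :=
      f.continuous.comp (((continuous_quotient_mk' : Continuous ((↑) : ℝ → Circ)).comp continuous_fst).prodMk continuous_snd)
    have h2 : Continuous fun q : ℝ × S => f ((0:Circ), q.2) :=
      f.continuous.comp (continuous_const.prodMk continuous_snd)
    exact h1.sub h2
  have hF0 : ∀ z : S, F (0, z) = 0 := by
    intro z
    show f (((0:ℝ) : Circ), z) - f ((0:Circ), z) = 0
    norm_num
  -- the δ of uniform continuity
  obtain ⟨δ, hδ0, hδ⟩ : ∃ δ > 0, ∀ a ∈ Icc (0:ℝ) 1, ∀ b ∈ Icc (0:ℝ) 1, |a - b| < δ →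
      ∀ z : S, F (a, z) - F (b, z) ≠ (((-(2⁻¹) : ℝ)) : Circ) := by
    set C : Set ((ℝ × ℝ) × S) :=
      {q | q.1.1 ∈ Icc (0:ℝ) 1 ∧ q.1.2 ∈ Icc (0:ℝ) 1 ∧
        F (q.1.1, q.2) - F (q.1.2, q.2) = (((-(2⁻¹) : ℝ)) : Circ)} with hCdef
    have hgc : Continuous fun q : (ℝ × ℝ) × S => F (q.1.1, q.2) - F (q.1.2, q.2) :=
      (hFc.comp ((continuous_fst.fst).prodMk continuous_snd)).sub
        (hFc.comp ((continuous_fst.snd).prodMk continuous_snd))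
    have hCclosed : IsClosed C := by
      have h1 : IsClosed {q : (ℝ × ℝ) × S | q.1.1 ∈ Icc (0:ℝ) 1} :=
        isClosed_Icc.preimage (continuous_fst.fst)
      have h2 : IsClosed {q : (ℝ × ℝ) × S | q.1.2 ∈ Icc (0:ℝ) 1} :=
        isClosed_Icc.preimage (continuous_fst.snd)
      have h3 : IsClosed {q : (ℝ × ℝ) × S |
          F (q.1.1, q.2) - F (q.1.2, q.2) = (((-(2⁻¹) : ℝ)) : Circ)} :=
        isClosed_eq hgc continuous_const
      have hCeq : C = {q : (ℝ × ℝ) × S | q.1.1 ∈ Icc (0:ℝ) 1} ∩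
          ({q : (ℝ × ℝ) × S | q.1.2 ∈ Icc (0:ℝ) 1} ∩ {q : (ℝ × ℝ) × S |
            F (q.1.1, q.2) - F (q.1.2, q.2) = (((-(2⁻¹) : ℝ)) : Circ)}) := by
        ext q; simp only [hCdef, mem_setOf_eq, mem_inter_iff, and_assoc]
      rw [hCeq]
      exact h1.inter (h2.inter h3)
    have hCcompact : IsCompact C :=
      ((isCompact_Icc.prod isCompact_Icc).prod isCompact_univ).of_isClosed_subset hCclosed
        (fun q hq => ⟨⟨hq.1, hq.2.1⟩, mem_univ _⟩)
    rcases C.eq_empty_or_nonempty with hCe | hCne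
    · refine ⟨1, one_pos, fun a ha b hb hab z hFeq => ?_⟩
      have : ((a, b), z) ∈ C := ⟨ha, hb, hFeq⟩
      rw [hCe] at this
      exact this
    · obtain ⟨q₀, hq₀C, hq₀min⟩ := hCcompact.exists_isMinOn hCne
        ((continuous_fst.fst.sub continuous_fst.snd).abs.continuousOn)
      refine ⟨|q₀.1.1 - q₀.1.2|, ?_, ?_⟩
      · obtain ⟨_, _, hbadq⟩ := hq₀C
        have hne : q₀.1.1 ≠ q₀.1.2 := by
          intro he
          rw [he, sub_self] at hbadq
          exact OrbHelp.bad_ne_zero hbadq.symm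
        exact abs_pos.mpr (sub_ne_zero.mpr hne)
      · intro a ha b hb hab z hFeq
        have hmemC : ((a, b), z) ∈ C := ⟨ha, hb, hFeq⟩
        exact absurd (isMinOn_iff.mp hq₀min _ hmemC) (not_le.mpr hab)
  -- choose N with 1/N < δ
  obtain ⟨N₀, hN₀⟩ := exists_nat_one_div_lt hδ0
  set N : ℕ := N₀ + 1 with hNdef
  have hNpos : (0:ℝ) < (N:ℝ) := by positivity
  have hNδ : (1:ℝ)/(N:ℝ) < δ := by
    rw [hNdef]; push_cast; exact hN₀
  -- the partial winding function K
  set K : ℝ × S → ℝ := fun q => ∑ m ∈ Finset.range N,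
      OrbHelp.sec (F (min q.1 (((m:ℝ)+1)/(N:ℝ)), q.2) - F (min q.1 ((m:ℝ)/(N:ℝ)), q.2)) with hK
  -- the arguments of `sec` avoid the bad point
  have havoid : ∀ (t : ℝ) (z : S) (m : ℕ), m < N →
      F (min t (((m:ℝ)+1)/(N:ℝ)), z) - F (min t ((m:ℝ)/(N:ℝ)), z)
        ≠ (((-(2⁻¹) : ℝ)) : Circ) := by
    intro t z m hm
    have h0m : (0:ℝ) ≤ (m:ℝ)/(N:ℝ) := by positivity
    have hmm : (m:ℝ)/(N:ℝ) ≤ ((m:ℝ)+1)/(N:ℝ) := by gcongr; linarith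
    have hm1 : ((m:ℝ)+1)/(N:ℝ) ≤ 1 := by
      rw [div_le_one hNpos]
      exact_mod_cast Nat.succ_le_of_lt hm
    have hdiff : ((m:ℝ)+1)/(N:ℝ) - (m:ℝ)/(N:ℝ) = 1/(N:ℝ) := by ring
    rcases le_total t ((m:ℝ)/(N:ℝ)) with h1 | h1
    · rw [min_eq_left h1, min_eq_left (h1.trans hmm), sub_self]
      exact fun hh => OrbHelp.bad_ne_zero hh.symm
    · rcases le_total t (((m:ℝ)+1)/(N:ℝ)) with h2 | h2
      · rw [min_eq_left h2, min_eq_right h1]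
        apply hδ _ ⟨h0m.trans h1, h2.trans hm1⟩ _ ⟨h0m, hmm.trans hm1⟩
        rw [abs_of_nonneg (by linarith)]
        calc t - (m:ℝ)/(N:ℝ) ≤ ((m:ℝ)+1)/(N:ℝ) - (m:ℝ)/(N:ℝ) := by linarith
        _ = 1/(N:ℝ) := hdiff
        _ < δ := hNδ
      · rw [min_eq_right h2, min_eq_right (hmm.trans h2)]
        apply hδ _ ⟨h0m.trans hmm, hm1⟩ _ ⟨h0m, hmm.trans hm1⟩
        rw [abs_of_nonneg (by linarith), hdiff]
        exact hNδ
  have hKc : Continuous K := by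
    rw [hK]
    apply continuous_finset_sum
    intro m hm
    rw [Finset.mem_range] at hm
    rw [continuous_iff_continuousAt]
    intro q
    have hinner : Continuous (fun q : ℝ × S =>
        F (min q.1 (((m:ℝ)+1)/(N:ℝ)), q.2) - F (min q.1 ((m:ℝ)/(N:ℝ)), q.2)) :=
      (hFc.comp ((continuous_fst.min continuous_const).prodMk continuous_snd)).sub
        (hFc.comp ((continuous_fst.min continuous_const).prodMk continuous_snd))
    have hca : ContinuousAt (fun q : ℝ × S => OrbHelp.sec
        (F (min q.1 (((m:ℝ)+1)/(N:ℝ)), q.2) - F (min q.1 ((m:ℝ)/(N:ℝ)), q.2))) q :=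
      ContinuousAt.comp (g := OrbHelp.sec) (x := q)
        (f := fun q : ℝ × S => F (min q.1 (((m:ℝ)+1)/(N:ℝ)), q.2) - F (min q.1 ((m:ℝ)/(N:ℝ)), q.2))
        (OrbHelp.sec_continuousAt (havoid q.1 q.2 m hm)) hinner.continuousAt
    exact hca
  have hK0 : ∀ z : S, K (0, z) = 0 := by
    intro z
    rw [hK]
    apply Finset.sum_eq_zero
    intro m _
    have e1 : min (0:ℝ) ((m:ℝ)/(N:ℝ)) = 0 := min_eq_left (by positivity)
    have e2 : min (0:ℝ) (((m:ℝ)+1)/(N:ℝ)) = 0 := min_eq_left (by positivity)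
    show OrbHelp.sec _ = 0
    rw [e1, e2, sub_self, OrbHelp.sec_zero]
  have hKcoe : ∀ t ∈ Icc (0:ℝ) 1, ∀ z : S, ((K (t, z) : ℝ) : Circ) = F (t, z) := by
    intro t ht z
    have hsum : ((K (t, z) : ℝ) : Circ) = ∑ m ∈ Finset.range N,
        ((OrbHelp.sec (F (min t (((m:ℝ)+1)/(N:ℝ)), z) - F (min t ((m:ℝ)/(N:ℝ)), z)) : ℝ) : Circ) := by
      rw [hK]
      exact map_sum (QuotientAddGroup.mk' (AddSubgroup.zmultiples (1:ℝ))) _ _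
    rw [hsum]
    have hterm : ∀ m ∈ Finset.range N,
        ((OrbHelp.sec (F (min t (((m:ℝ)+1)/(N:ℝ)), z) - F (min t ((m:ℝ)/(N:ℝ)), z)) : ℝ) : Circ) =
        (fun m : ℕ => F (min t ((m:ℝ)/(N:ℝ)), z)) (m+1) - (fun m : ℕ => F (min t ((m:ℝ)/(N:ℝ)), z)) m := by
      intro m _
      rw [OrbHelp.sec_coe]
      push_cast
      ring_nf
    rw [Finset.sum_congr rfl hterm, Finset.sum_range_sub (fun m : ℕ => F (min t ((m:ℝ)/(N:ℝ)), z))]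
    have eN : min t ((N:ℝ)/(N:ℝ)) = t := by
      rw [div_self hNpos.ne']
      exact min_eq_left ht.2
    have e0 : min t (((0:ℕ):ℝ)/(N:ℝ)) = 0 := by
      rw [Nat.cast_zero, zero_div]
      exact min_eq_right ht.1
    show F (min t ((N:ℝ)/(N:ℝ)), z) - F (min t (((0:ℕ):ℝ)/(N:ℝ)), z) = F (t, z)
    rw [eN, e0, hF0, sub_zero]
  -- `K (1, ·)` is integer-valued
  have hone : (((1:ℝ) : ℝ) : Circ) = 0 := by
    have := OrbHelp.coe_nat_eq_zero 1
    push_cast at this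
    exact this
  have hWint : ∀ z : S, ∃ n : ℤ, K (1, z) = n := by
    intro z
    have h1 : ((K (1, z) : ℝ) : Circ) = F (1, z) := hKcoe 1 ⟨zero_le_one, le_rfl⟩ z
    have h2 : F (1, z) = 0 := by
      show f (((1:ℝ) : Circ), z) - f ((0:Circ), z) = 0
      rw [show ((1:ℝ) : Circ) = (0 : Circ) from hone]
      norm_num
    obtain ⟨n, hn⟩ := OrbHelp.exists_int_of_coe_eq (y := (0:ℝ)) (by rw [h1, h2]; norm_num)
    exact ⟨n, by linarith⟩
  -- `K (1, ·)` is constant (degree is independent of the point)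
  have hWconst : ∀ z : S, K (1, z) = K (1, p₀) := by
    intro z
    by_contra hne
    obtain ⟨n, hn⟩ := hWint z
    obtain ⟨m, hm⟩ := hWint p₀
    have hWc : Continuous fun z : S => K (1, z) :=
      hKc.comp (continuous_const.prodMk continuous_id)
    have himg : IsPreconnected ((fun z : S => K (1, z)) '' univ) :=
      isPreconnected_univ.image _ hWc.continuousOn
    have hoc : OrdConnected ((fun z : S => K (1, z)) '' univ) := himg.ordConnected
    have hzmem : K (1, z) ∈ (fun z : S => K (1, z)) '' univ := ⟨z, mem_univ _, rfl⟩
    have hpmem : K (1, p₀) ∈ (fun z : S => K (1, z)) '' univ := ⟨p₀, mem_univ _, rfl⟩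
    have hcmem : min (K (1, z)) (K (1, p₀)) ∈ (fun z : S => K (1, z)) '' univ := by
      rcases min_cases (K (1, z)) (K (1, p₀)) with ⟨he, -⟩ | ⟨he, -⟩ <;> rw [he]
      exacts [hzmem, hpmem]
    have hdmem : max (K (1, z)) (K (1, p₀)) ∈ (fun z : S => K (1, z)) '' univ := by
      rcases max_cases (K (1, z)) (K (1, p₀)) with ⟨he, -⟩ | ⟨he, -⟩ <;> rw [he]
      exacts [hzmem, hpmem]
    have hgap : (1:ℝ) ≤ max (K (1, z)) (K (1, p₀)) - min (K (1, z)) (K (1, p₀)) := by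
      have hnm : n ≠ m := by
        intro h; apply hne; rw [hn, hm, h]
      have h1 : (1:ℝ) ≤ |((n - m : ℤ) : ℝ)| := by
        exact_mod_cast Int.one_le_abs (sub_ne_zero.mpr hnm)
      rw [max_sub_min_eq_abs, hn, hm]
      push_cast at h1 ⊢
      rw [abs_sub_comm]
      exact h1
    have hmid : min (K (1, z)) (K (1, p₀)) + 2⁻¹
        ∈ Icc (min (K (1, z)) (K (1, p₀))) (max (K (1, z)) (K (1, p₀))) :=
      ⟨by linarith, by linarith⟩
    obtain ⟨z', -, hz'⟩ := hoc.out hcmem hdmem hmid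
    obtain ⟨q, hq⟩ := hWint z'
    have hr : ∃ r : ℤ, min (K (1, z)) (K (1, p₀)) = r := by
      rcases min_cases (K (1, z)) (K (1, p₀)) with ⟨he, -⟩ | ⟨he, -⟩ <;> rw [he]
      exacts [⟨n, hn⟩, ⟨m, hm⟩]
    obtain ⟨r, hrr⟩ := hr
    apply OrbHelp.int_ne_half (q - r)
    push_cast
    have hz'' : K (1, z') = min (K (1, z)) (K (1, p₀)) + 2⁻¹ := hz'
    rw [hz'', hrr] at hq
    linarith
  -- `K (1, p₀) = d`
  have hKp₀ : K (1, p₀) = (d : ℝ) := by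
    have hhc : Continuous fun t : ℝ => K (t, p₀) - (Ld t - Ld 0) :=
      (hKc.comp (continuous_id.prodMk continuous_const)).sub (hLdc.sub continuous_const)
    have hv : ∀ t ∈ Icc (0:ℝ) 1,
        (((fun t : ℝ => K (t, p₀) - (Ld t - Ld 0)) t : ℝ) : Circ) =
        (((fun t : ℝ => K (t, p₀) - (Ld t - Ld 0)) 0 : ℝ) : Circ) := by
      intro t ht
      show ((K (t, p₀) - (Ld t - Ld 0) : ℝ) : Circ) = ((K (0, p₀) - (Ld 0 - Ld 0) : ℝ) : Circ)
      rw [hK0, sub_self, sub_zero, QuotientAddGroup.mk_zero]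
      rw [QuotientAddGroup.mk_sub, QuotientAddGroup.mk_sub, hKcoe t ht p₀, hLdcoe t, hLdcoe 0]
      show F (t, p₀) - (f (((t:ℝ) : Circ), p₀) - f (((0:ℝ):Circ), p₀)) = 0
      show f (((t:ℝ) : Circ), p₀) - f ((0:Circ), p₀)
        - (f (((t:ℝ) : Circ), p₀) - f (((0:ℝ):Circ), p₀)) = 0
      rw [QuotientAddGroup.mk_zero]
      abel
    have h10 := OrbHelp.lift_const zero_le_one hhc.continuousOn hv
    rw [hK0, hLd1] at h10
    linarith [h10]
  -- powers of the equivalence are iterates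
  have hiterN : ∀ (j : ℕ) (x : S), (φ.toEquiv ^ j) x = (⇑φ)^[j] x := by
    intro j
    induction j with
    | zero => intro x; simp
    | succ n ih =>
      intro x
      rw [pow_succ, Equiv.Perm.mul_apply, iterate_succ_apply]
      exact ih (φ x)
  have hgc : Continuous g := by
    have hg' : g = fun x => G (1, x) := funext hgG
    rw [hg']
    exact hGc.comp (continuous_const.prodMk continuous_id)
  -- the step lemma
  have hstep : ∀ j : ℕ, L ((j:ℝ) + 1) = L (j:ℝ) + (d:ℝ) + g ((⇑φ)^[j] x₁) := by
    intro j
    set y : S := (⇑φ)^[j] x₁ with hy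
    set h : ℝ → ℝ := fun t => L ((j:ℝ) + t) - K (t, Φ.φt t y) - G (t, y) with hh
    have hhc : Continuous h := by
      have h1 : Continuous fun t : ℝ => L ((j:ℝ) + t) :=
        hLc.comp (continuous_const.add continuous_id)
      have h2 : Continuous fun t : ℝ => K (t, Φ.φt t y) :=
        hKc.comp (continuous_id.prodMk
          (Φ.continuous_toFun.comp (continuous_id.prodMk continuous_const)))
      have h3 : Continuous fun t : ℝ => G (t, y) :=
        hGc.comp (continuous_id.prodMk continuous_const)
      exact (h1.sub h2).sub h3
    have hLco : ∀ t ∈ Ico (0:ℝ) 1,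
        ((L ((j:ℝ) + t) : ℝ) : Circ) = f (((t:ℝ) : Circ), Φ.φt t y) := by
      intro t ht
      have hjz : ((j:ℝ)) = ((j:ℤ):ℝ) := by push_cast; ring
      have hfr : Int.fract ((j:ℝ) + t) = t := by
        rw [hjz, Int.fract_intCast_add, Int.fract_eq_self.mpr ⟨ht.1, ht.2⟩]
      have hfl : ⌊(j:ℝ) + t⌋ = (j:ℤ) := by
        rw [hjz, Int.floor_intCast_add, Int.floor_eq_zero_iff.mpr ⟨ht.1, ht.2⟩]
        ring
      have hcoe : (((j:ℝ) + t : ℝ) : Circ) = ((t : ℝ) : Circ) := by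
        rw [QuotientAddGroup.mk_add, OrbHelp.coe_nat_eq_zero j, zero_add]
      rw [hL ((j:ℝ) + t), hfr, hfl, hcoe, zpow_natCast, hiterN j x₁]
    have hv0 : ∀ t ∈ Ico (0:ℝ) 1, ((h t : ℝ) : Circ) = f ((0:Circ), y) := by
      intro t ht
      have htIcc : t ∈ Icc (0:ℝ) 1 := ⟨ht.1, ht.2.le⟩
      show ((L ((j:ℝ) + t) - K (t, Φ.φt t y) - G (t, y) : ℝ) : Circ) = f ((0:Circ), y)
      rw [QuotientAddGroup.mk_sub, QuotientAddGroup.mk_sub, hLco t ht,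
        hKcoe t htIcc (Φ.φt t y), hGcoe t y]
      show f (((t:ℝ):Circ), Φ.φt t y)
          - (f (((t:ℝ):Circ), Φ.φt t y) - f ((0:Circ), Φ.φt t y))
          - (f ((0:Circ), Φ.φt t y) - f ((0:Circ), y)) = f ((0:Circ), y)
      abel
    have hvc : ∀ t ∈ Icc (0:ℝ) 1, ((h t : ℝ) : Circ) = ((h 0 : ℝ) : Circ) := by
      have hcl : IsClosed {t : ℝ | ((h t : ℝ) : Circ) = f ((0:Circ), y)} :=
        isClosed_eq ((continuous_quotient_mk' : Continuous ((↑) : ℝ → Circ)).comp hhc)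
          continuous_const
      have hsub : Icc (0:ℝ) 1 ⊆ {t : ℝ | ((h t : ℝ) : Circ) = f ((0:Circ), y)} := by
        rw [← closure_Ico (zero_ne_one (α := ℝ))]
        exact closure_minimal (fun t ht => hv0 t ht) hcl
      intro t ht
      exact (hsub ht).trans (hsub (left_mem_Icc.mpr zero_le_one)).symm
    have h10 := OrbHelp.lift_const zero_le_one hhc.continuousOn hvc
    have e0 : h 0 = L (j:ℝ) := by
      show L ((j:ℝ) + 0) - K (0, Φ.φt 0 y) - G (0, y) = L (j:ℝ)
      rw [add_zero, hK0, hG0]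
      ring
    have e1 : h 1 = L ((j:ℝ) + 1) - (d:ℝ) - g y := by
      show L ((j:ℝ) + 1) - K (1, Φ.φt 1 y) - G (1, y) = _
      rw [hWconst (Φ.φt 1 y), hKp₀, hgG y]
    rw [e0, e1] at h10
    linarith
  -- telescoping sum
  have hLsum : L ((k:ℕ):ℝ) - L ((0:ℕ):ℝ)
      = ∑ j ∈ Finset.range k, (L (((j+1:ℕ)):ℝ) - L ((j:ℕ):ℝ)) :=
    (Finset.sum_range_sub (fun j : ℕ => L ((j:ℕ):ℝ)) k).symm
  have hterm2 : ∀ j : ℕ, L (((j+1:ℕ)):ℝ) - L ((j:ℕ):ℝ) = (d:ℝ) + g ((⇑φ)^[j] x₁) := by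
    intro j
    have hc : (((j+1:ℕ)):ℝ) = (j:ℝ) + 1 := by push_cast; ring
    rw [hc, hstep j]
    ring
  -- the integral over the orbit measure
  haveI : MeasurableSingletonClass S := ⟨fun x => isClosed_singleton.measurableSet⟩
  have hgint : ∀ x : S, Integrable g (Measure.dirac x) := by
    intro x
    refine ⟨hgc.aestronglyMeasurable, ?_⟩
    show (∫⁻ a, ‖g a‖₊ ∂(Measure.dirac x)) < ⊤
    rw [lintegral_dirac]
    exact ENNReal.coe_lt_top
  have hρk : ∑ j ∈ Finset.range k, g ((⇑φ)^[j] x₁) = (k:ℝ) * ρ := by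
    have h1 : ∫ x, g x ∂(orbitMeasure ⇑φ x₁ k)
        = ((k : ENNReal)⁻¹).toReal * ∑ j ∈ Finset.range k, ∫ x, g x ∂(Measure.dirac ((⇑φ)^[j] x₁)) := by
      rw [orbitMeasure, integral_smul_measure,
        integral_finset_sum_measure (fun j _ => hgint _)]
      rfl
    have h2 : ∀ j ∈ Finset.range k,
        ∫ x, g x ∂(Measure.dirac ((⇑φ)^[j] x₁)) = g ((⇑φ)^[j] x₁) :=
      fun j _ => integral_dirac g _
    have htr : ((k : ENNReal)⁻¹).toReal = (k:ℝ)⁻¹ := by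
      rw [ENNReal.toReal_inv, ENNReal.toReal_natCast]
    rw [hint, Finset.sum_congr rfl h2, htr] at h1
    have hkne : (k:ℝ) ≠ 0 := Nat.cast_ne_zero.mpr hk.ne'
    field_simp at h1
    linarith
  -- final assembly
  have hfin : L ((k:ℕ):ℝ) - L ((0:ℕ):ℝ) = (k:ℝ) * (d:ℝ) + (k:ℝ) * ρ := by
    rw [hLsum, Finset.sum_congr rfl (fun j _ => hterm2 j), Finset.sum_add_distrib,
      Finset.sum_const, Finset.card_range, nsmul_eq_mul, hρk]
  rw [Nat.cast_zero] at hfin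
  rw [hfin]
  ring

end
end
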